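/- If λ is an eigenvalue of U restricted to 𝓛 = range(L), then λ is an eigenvalue of T̃ (in the generalized sense: some generalized eigenvector exists). -/

import Mathlib

open ContinuousLinearMap

theorem stmt7 {K₁ K₂ : Type*}
    [NormedAddCommGroup K₁] [InnerProductSpace ℂ K₁] [FiniteDimensional ℂ K₁]
    [NormedAddCommGroup K₂] [InnerProductSpace ℂ K₂] [FiniteDimensional ℂ K₂]
    (S : K₂ →L[ℂ] K₂) (hS : IsSelfAdjoint S) (hSu : S ∈ unitary (K₂ →L[ℂ] K₂))
    (dA : K₂ →L[ℂ] K₁) (h : dA ∘L adjoint dA = 1)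
    (dB : K₂ →L[ℂ] K₁) (hdB : dB = dA ∘L S)
    (T : K₁ →L[ℂ] K₁) (hT : T = dA ∘L adjoint dB)
    (U : K₂ →L[ℂ] K₂) (hU : U = S ∘L ((2:ℂ) • (adjoint dA ∘L dA) - 1))
    (L : K₁ × K₁ →L[ℂ] K₂) (hL : ∀ f g : K₁, L (f, g) = adjoint dA f + adjoint dB g)
    (Ttil : K₁ × K₁ →L[ℂ] K₁ × K₁)
    (hTtil : ∀ f g : K₁, Ttil (f, g) = (-g, f + (2:ℂ) • T g))
    (lam : ℂ) (hlam : ∃ φ : K₂, φ ∈ Set.range L ∧ φ ≠ 0 ∧ U φ = lam • φ) :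
    ∃ (n : ℕ) (ψ : K₁ × K₁), ψ ≠ 0 ∧ ((lam • (1 : K₁ × K₁ →L[ℂ] K₁ × K₁) - Ttil) ^ n) ψ = 0 := by
  obtain ⟨φ, ⟨ψ₀, hψ₀⟩, hφne, hφeig⟩ := hlam
  set A : K₁ × K₁ →L[ℂ] K₁ × K₁ := lam • (1 : K₁ × K₁ →L[ℂ] K₁ × K₁) - Ttil with hAdef
  -- basic identities
  have hSadj : adjoint S = S := hS
  have hSS : ∀ x : K₂, S (S x) = x := by
    intro x
    have h1 : star S * S = 1 := (Unitary.mem_iff.mp hSu).1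
    have h2 : (star S * S) x = (1 : K₂ →L[ℂ] K₂) x := by rw [h1]
    simpa [ContinuousLinearMap.mul_apply, star_eq_adjoint, hSadj] using h2
  have hdd : ∀ x : K₁, dA (adjoint dA x) = x := by
    intro x
    have := congrArg (fun (M : K₁ →L[ℂ] K₁) => M x) h
    simpa using this
  have hdBadj : adjoint dB = S ∘L adjoint dA := by
    rw [hdB, adjoint_comp, hSadj]
  have hTapp : ∀ g : K₁, T g = dA (S (adjoint dA g)) := by
    intro g
    rw [hT]
    simp [hdBadj]
  -- action of U on the two generators
  have hU1 : ∀ f : K₁, U (adjoint dA f) = adjoint dB f := by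
    intro f
    rw [hU, hdBadj]
    simp only [comp_apply, sub_apply, smul_apply, comp_apply, ContinuousLinearMap.one_apply]
    rw [hdd f]
    congr 1
    module
  have hU2 : ∀ g : K₁, U (adjoint dB g) = (2:ℂ) • adjoint dB (T g) - adjoint dA g := by
    intro g
    rw [hU, hdBadj]
    simp only [comp_apply, sub_apply, smul_apply, comp_apply, ContinuousLinearMap.one_apply]
    rw [← hTapp g, map_sub, map_smul, hSS]
  -- intertwining relation: L (A ψ) = lam • L ψ - U (L ψ)
  have key : ∀ ψ : K₁ × K₁, L (A ψ) = lam • L ψ - U (L ψ) := by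
    rintro ⟨f, g⟩
    have hApt : A (f, g) = (lam • f + g, lam • g - (f + (2:ℂ) • T g)) := by
      simp only [hAdef, sub_apply, smul_apply, ContinuousLinearMap.one_apply, hTtil, Prod.smul_mk,
        Prod.mk_sub_mk, sub_neg_eq_add]
    rw [hApt, hL, hL]
    simp only [map_add, map_sub, map_smul]
    rw [hU1, hU2]
    module
  have hAψ₀ : L (A ψ₀) = 0 := by
    rw [key, hψ₀, hφeig]; abel
  -- A is not injective
  have hnotinj : ¬ Function.Injective A := by
    intro hinj
    have hinv : ∀ x ∈ LinearMap.ker (L : K₁ × K₁ →ₗ[ℂ] K₂), A x ∈ LinearMap.ker (L : K₁ × K₁ →ₗ[ℂ] K₂) := by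
      intro x hx
      have hx' : L x = 0 := hx
      have hx2 : L (A x) = 0 := by rw [key, hx']; simp
      exact hx2
    let A' : LinearMap.ker (L : K₁ × K₁ →ₗ[ℂ] K₂) →ₗ[ℂ] LinearMap.ker (L : K₁ × K₁ →ₗ[ℂ] K₂) :=
      ((A : K₁ × K₁ →ₗ[ℂ] K₁ × K₁)).restrict hinv
    have hA'coe : ∀ x : LinearMap.ker (L : K₁ × K₁ →ₗ[ℂ] K₂), (A' x : K₁ × K₁) = A x.1 := by
      intro x; rfl
    have hA'inj : Function.Injective A' := by
      intro x y hxy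
      apply Subtype.ext
      apply hinj
      rw [← hA'coe, ← hA'coe, hxy]
    have hA'surj : Function.Surjective A' :=
      LinearMap.injective_iff_surjective.mp hA'inj
    obtain ⟨ψ₁, hψ₁⟩ := hA'surj ⟨A ψ₀, hAψ₀⟩
    have hval : A ψ₁.1 = A ψ₀ := by
      rw [← hA'coe, hψ₁]
    have heq : (ψ₁ : K₁ × K₁) = ψ₀ := hinj hval
    have hL0 : L ψ₀ = 0 := by rw [← heq]; exact ψ₁.2
    rw [hψ₀] at hL0
    exact hφne hL0
  rw [Function.not_injective_iff] at hnotinj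
  obtain ⟨a, b, hab, hne⟩ := hnotinj
  refine ⟨1, a - b, sub_ne_zero.mpr hne, ?_⟩
  rw [pow_one]
  show A (a - b) = 0
  rw [map_sub, hab, sub_self]
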